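/- arXiv:2108.09695 — 5 statements merged into one kernel-verified Lean document; each statement's English description precedes it below -/
import Mathlib

section
/- A power function and an affine function intersect at most twice in the open first quadrant: for real constants C > 0, p ∈ ℝ, m, b ∈ ℝ, the set {x ∈ ℝ : x > 0, C·x^p > 0, and C·x^p = m·x + b} has at most 2 elements, provided the function x ↦ C·x^p − m·x − b is not identically zero on (0,∞). -/
private lemma hasDerivAt_f' (C p m b t : ℝ) (ht : 0 < t) :
    HasDerivAt (fun s => C * s ^ p - m * s - b) (C * p * t ^ (p - 1) - m) t := by
  have h1 : HasDerivAt (fun s : ℝ => s ^ p) (p * t ^ (p - 1)) t :=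
    Real.hasDerivAt_rpow_const (Or.inl ht.ne')
  have h := ((h1.const_mul C).sub ((hasDerivAt_id t).const_mul m)).sub_const b
  exact h.congr_deriv (by ring)

private lemma hasDerivAt_g' (C p m t : ℝ) (ht : 0 < t) :
    HasDerivAt (fun s => C * p * s ^ (p - 1) - m) (C * p * ((p - 1) * t ^ (p - 2))) t := by
  have h1 : HasDerivAt (fun s : ℝ => s ^ (p - 1)) ((p - 1) * t ^ (p - 1 - 1)) t :=
    Real.hasDerivAt_rpow_const (Or.inl ht.ne')
  have h2 := (h1.const_mul (C * p)).sub_const m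
  have he : p - 1 - 1 = p - 2 := by ring
  rw [he] at h2
  exact h2

private lemma rolle_f (C p m b a c : ℝ) (ha : 0 < a) (hac : a < c)
    (hfa : C * a ^ p - m * a - b = 0) (hfc : C * c ^ p - m * c - b = 0) :
    ∃ t ∈ Set.Ioo a c, C * p * t ^ (p - 1) - m = 0 := by
  apply exists_hasDerivAt_eq_zero hac
  · intro t ht
    exact (hasDerivAt_f' C p m b t (lt_of_lt_of_le ha ht.1)).continuousAt.continuousWithinAt
  · rw [hfa, hfc]
  · intro t ht
    exact hasDerivAt_f' C p m b t (ha.trans ht.1)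

private lemma three_roots_false (C p m b : ℝ) (hC : 0 < C) (hp0 : p ≠ 0) (hp1 : p ≠ 1)
    {a b' c : ℝ} (ha : 0 < a) (hab : a < b') (hbc : b' < c)
    (fa : C * a ^ p - m * a - b = 0) (fb : C * b' ^ p - m * b' - b = 0)
    (fc : C * c ^ p - m * c - b = 0) : False := by
  obtain ⟨t1, ht1, e1⟩ := rolle_f C p m b a b' ha hab fa fb
  obtain ⟨t2, ht2, e2⟩ := rolle_f C p m b b' c (ha.trans hab) hbc fb fc
  have ht1pos : 0 < t1 := ha.trans ht1.1
  have h12 : t1 < t2 := ht1.2.trans ht2.1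
  obtain ⟨s, hs, es⟩ := exists_hasDerivAt_eq_zero h12
    (fun t ht => (hasDerivAt_g' C p m t (ht1pos.trans_le ht.1)).continuousAt.continuousWithinAt)
    (by rw [e1, e2])
    (fun t ht => hasDerivAt_g' C p m t (ht1pos.trans ht.1))
  have hspos : 0 < s := ht1pos.trans hs.1
  have hrp : (0:ℝ) < s ^ (p - 2) := Real.rpow_pos_of_pos hspos _
  have hp1' : p - 1 ≠ 0 := sub_ne_zero.mpr hp1
  exact (mul_ne_zero (mul_ne_zero hC.ne' hp0) (mul_ne_zero hp1' hrp.ne')) es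

/-- A power function and an affine function intersect at most twice in the
open first quadrant, unless C·x^p − m·x − b vanishes identically on (0,∞). -/
theorem stmt4 (C p m b : ℝ) (hC : 0 < C)
    (hne : ¬ ∀ x : ℝ, 0 < x → C * x ^ p - m * x - b = 0) :
    ∀ x y z : ℝ,
      (0 < x ∧ 0 < C * x ^ p ∧ C * x ^ p = m * x + b) →
      (0 < y ∧ 0 < C * y ^ p ∧ C * y ^ p = m * y + b) →
      (0 < z ∧ 0 < C * z ^ p ∧ C * z ^ p = m * z + b) →
      x = y ∨ x = z ∨ y = z := by
  intro x y z hx hy hz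
  by_contra hcon
  push_neg at hcon
  obtain ⟨hxy, hxz, hyz⟩ := hcon
  have fx : C * x ^ p - m * x - b = 0 := by linarith [hx.2.2]
  have fy : C * y ^ p - m * y - b = 0 := by linarith [hy.2.2]
  have fz : C * z ^ p - m * z - b = 0 := by linarith [hz.2.2]
  rcases eq_or_ne p 0 with hp0 | hp0
  · subst hp0
    rw [Real.rpow_zero] at fx fy
    have hm : m * (x - y) = 0 := by linear_combination fy - fx
    have hm0 : m = 0 := by
      rcases mul_eq_zero.mp hm with h | h
      · exact h
      · exact absurd (by linarith : x = y) hxy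
    subst hm0
    exact hne fun t ht => by rw [Real.rpow_zero]; linear_combination fx
  rcases eq_or_ne p 1 with hp1 | hp1
  · subst hp1
    rw [Real.rpow_one] at fx fy
    have hm : (C - m) * (x - y) = 0 := by linear_combination fx - fy
    have hm0 : C = m := by
      rcases mul_eq_zero.mp hm with h | h
      · linarith
      · exact absurd (by linarith : x = y) hxy
    have hb0 : b = 0 := by subst hm0; linear_combination -fx
    exact hne fun t ht => by rw [Real.rpow_one]; subst hm0; subst hb0; ring
  exfalso
  rcases lt_trichotomy x y with h1 | h1 | h1
  · rcases lt_trichotomy y z with h2 | h2 | h2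
    · exact three_roots_false C p m b hC hp0 hp1 hx.1 h1 h2 fx fy fz
    · exact hyz h2
    · rcases lt_trichotomy x z with h3 | h3 | h3
      · exact three_roots_false C p m b hC hp0 hp1 hx.1 h3 h2 fx fz fy
      · exact hxz h3
      · exact three_roots_false C p m b hC hp0 hp1 hz.1 h3 h1 fz fx fy
  · exact hxy h1
  · rcases lt_trichotomy x z with h2 | h2 | h2
    · exact three_roots_false C p m b hC hp0 hp1 hy.1 h1 h2 fy fx fz
    · exact hxz h2
    · rcases lt_trichotomy y z with h3 | h3 | h3
      · exact three_roots_false C p m b hC hp0 hp1 hy.1 h3 h2 fy fz fx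
      · exact hyz h3
      · exact three_roots_false C p m b hC hp0 hp1 hz.1 h3 h1 fz fy fx
end

section
/- Let S₁ and S₄ be nonempty finite disjoint index sets with positive weights wₖ (k ∈ S₁ ∪ S₄) and positive reals bₖ. Suppose Σ_{k∈S₁} wₖ bₖ = Σ_{k∈S₄} wₖ bₖ. Then the quantity D := −Σ_{k∈S₁} wₖ bₖ² + Σ_{k∈S₄} wₖ bₖ² satisfies (−1/min_{k∈S₁} wₖ + 1/Σ_{k∈S₄} wₖ)·(Σ_{k∈S₁} wₖ bₖ)² ≤ D ≤ (−1/Σ_{k∈S₁} wₖ + 1/min_{k∈S₄} wₖ)·(Σ_{k∈S₁} wₖ bₖ)². -/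
lemma stmt7_aux (S : Finset ℕ) (h : S.Nonempty) (w b : ℕ → ℝ)
    (hw : ∀ k ∈ S, 0 < w k) (hb : ∀ k ∈ S, 0 < b k) :
    (∑ k ∈ S, w k * b k) ^ 2 / (∑ k ∈ S, w k) ≤ ∑ k ∈ S, w k * b k ^ 2 ∧
    ∑ k ∈ S, w k * b k ^ 2 ≤ (∑ k ∈ S, w k * b k) ^ 2 / S.inf' h w := by
  have hWpos : 0 < ∑ k ∈ S, w k := Finset.sum_pos hw h
  have hmpos : 0 < S.inf' h w := by
    rw [Finset.lt_inf'_iff]; exact hw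
  have hA : 0 ≤ ∑ k ∈ S, w k * b k :=
    Finset.sum_nonneg fun k hk => le_of_lt (mul_pos (hw k hk) (hb k hk))
  constructor
  · rw [div_le_iff₀ hWpos]
    calc (∑ k ∈ S, w k * b k) ^ 2
        = (∑ k ∈ S, Real.sqrt (w k) * (Real.sqrt (w k) * b k)) ^ 2 := by
          congr 1; apply Finset.sum_congr rfl; intro k hk
          rw [← mul_assoc, Real.mul_self_sqrt (hw k hk).le]
      _ ≤ (∑ k ∈ S, Real.sqrt (w k) ^ 2) * (∑ k ∈ S, (Real.sqrt (w k) * b k) ^ 2) :=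
          Finset.sum_mul_sq_le_sq_mul_sq S _ _
      _ = (∑ k ∈ S, w k * b k ^ 2) * (∑ k ∈ S, w k) := by
          rw [mul_comm]; congr 1
          · apply Finset.sum_congr rfl; intro k hk
            rw [mul_pow, Real.sq_sqrt (hw k hk).le]
          · apply Finset.sum_congr rfl; intro k hk
            exact Real.sq_sqrt (hw k hk).le
  · rw [le_div_iff₀ hmpos]
    calc (∑ k ∈ S, w k * b k ^ 2) * S.inf' h w
        = ∑ k ∈ S, (w k * b k) * (b k * S.inf' h w) := by
          rw [Finset.sum_mul]; apply Finset.sum_congr rfl; intro k hk; ring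
      _ ≤ ∑ k ∈ S, (w k * b k) * (∑ j ∈ S, w j * b j) := by
          apply Finset.sum_le_sum; intro k hk
          apply mul_le_mul_of_nonneg_left _ (le_of_lt (mul_pos (hw k hk) (hb k hk)))
          calc b k * S.inf' h w ≤ b k * w k :=
                mul_le_mul_of_nonneg_left (Finset.inf'_le w hk) (hb k hk).le
            _ = w k * b k := mul_comm _ _
            _ ≤ ∑ j ∈ S, w j * b j := Finset.single_le_sum
                (fun j hj => le_of_lt (mul_pos (hw j hj) (hb j hj))) hk
      _ = (∑ k ∈ S, w k * b k) ^ 2 := by rw [← Finset.sum_mul]; ring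

/-- Two-sided bound on D = −Σ_{S₁} wb² + Σ_{S₄} wb² at a balance point. -/
theorem stmt7 (S1 S4 : Finset ℕ) (h1 : S1.Nonempty) (h4 : S4.Nonempty)
    (hdisj : Disjoint S1 S4) (w b : ℕ → ℝ)
    (hw : ∀ k ∈ S1 ∪ S4, 0 < w k) (hb : ∀ k ∈ S1 ∪ S4, 0 < b k)
    (heq : ∑ k ∈ S1, w k * b k = ∑ k ∈ S4, w k * b k)
    (D : ℝ) (hD : D = -(∑ k ∈ S1, w k * b k ^ 2) + ∑ k ∈ S4, w k * b k ^ 2) :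
    (-(1 / S1.inf' h1 w) + 1 / ∑ k ∈ S4, w k) * (∑ k ∈ S1, w k * b k) ^ 2 ≤ D ∧
    D ≤ (-(1 / ∑ k ∈ S1, w k) + 1 / S4.inf' h4 w) * (∑ k ∈ S1, w k * b k) ^ 2 := by
  have hw1 : ∀ k ∈ S1, 0 < w k := fun k hk => hw k (Finset.mem_union_left _ hk)
  have hw4 : ∀ k ∈ S4, 0 < w k := fun k hk => hw k (Finset.mem_union_right _ hk)
  have hb1 : ∀ k ∈ S1, 0 < b k := fun k hk => hb k (Finset.mem_union_left _ hk)
  have hb4 : ∀ k ∈ S4, 0 < b k := fun k hk => hb k (Finset.mem_union_right _ hk)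
  obtain ⟨l1, u1⟩ := stmt7_aux S1 h1 w b hw1 hb1
  obtain ⟨l4, u4⟩ := stmt7_aux S4 h4 w b hw4 hb4
  rw [← heq] at l4 u4
  rw [hD]
  constructor
  · have : (-(1 / S1.inf' h1 w) + 1 / ∑ k ∈ S4, w k) * (∑ k ∈ S1, w k * b k) ^ 2
        = -((∑ k ∈ S1, w k * b k) ^ 2 / S1.inf' h1 w)
          + (∑ k ∈ S1, w k * b k) ^ 2 / ∑ k ∈ S4, w k := by ring
    rw [this]; exact add_le_add (neg_le_neg u1) l4
  · have : (-(1 / ∑ k ∈ S1, w k) + 1 / S4.inf' h4 w) * (∑ k ∈ S1, w k * b k) ^ 2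
        = -((∑ k ∈ S1, w k * b k) ^ 2 / ∑ k ∈ S1, w k)
          + (∑ k ∈ S1, w k * b k) ^ 2 / S4.inf' h4 w := by ring
    rw [this]; exact add_le_add (neg_le_neg l1) u4
end

section
/- Under the hypotheses of the previous statement, if additionally the left-hand equality holds, i.e., D = (−1/min_{k∈S₁} wₖ + 1/Σ_{k∈S₄} wₖ)·(Σ_{k∈S₁} wₖ bₖ)², then S₁ is a singleton. -/
/-- If the left-hand equality in the two-sided bound on D holds, then S₁ is a
singleton. -/
theorem stmt8 (S1 S4 : Finset ℕ) (h1 : S1.Nonempty) (h4 : S4.Nonempty)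
    (hdisj : Disjoint S1 S4) (w b : ℕ → ℝ)
    (hw : ∀ k ∈ S1 ∪ S4, 0 < w k) (hb : ∀ k ∈ S1 ∪ S4, 0 < b k)
    (heq : ∑ k ∈ S1, w k * b k = ∑ k ∈ S4, w k * b k)
    (D : ℝ) (hD : D = -(∑ k ∈ S1, w k * b k ^ 2) + ∑ k ∈ S4, w k * b k ^ 2)
    (heqL : D = (-(1 / S1.inf' h1 w) + 1 / ∑ k ∈ S4, w k) * (∑ k ∈ S1, w k * b k) ^ 2) :
    S1.card = 1 := by
  by_contra hcard
  have hcard1 : 1 ≤ S1.card := Finset.one_le_card.mpr h1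
  have h2 : 1 < S1.card := by omega
  obtain ⟨i, hi, j, hj, hij⟩ := Finset.one_lt_card.mp h2
  set m := S1.inf' h1 w with hm_def
  have hw1 : ∀ k ∈ S1, 0 < w k := fun k hk => hw k (Finset.mem_union_left _ hk)
  have hb1 : ∀ k ∈ S1, 0 < b k := fun k hk => hb k (Finset.mem_union_left _ hk)
  have hw4 : ∀ k ∈ S4, 0 < w k := fun k hk => hw k (Finset.mem_union_right _ hk)
  have hm_pos : 0 < m := by
    obtain ⟨k, hk, hkeq⟩ := S1.exists_mem_eq_inf' h1 w
    rw [hm_def, hkeq]; exact hw1 k hk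
  have hm_le : ∀ k ∈ S1, m ≤ w k := fun k hk => Finset.inf'_le w hk
  set B := ∑ k ∈ S1, w k * b k with hB_def
  set W := ∑ k ∈ S4, w k with hW_def
  have hW_pos : 0 < W := Finset.sum_pos hw4 h4
  -- strict part on S1
  have hx_pos : ∀ k ∈ S1, 0 < w k * b k := fun k hk => mul_pos (hw1 k hk) (hb1 k hk)
  have hxi_lt : w i * b i < B :=
    Finset.single_lt_sum hij.symm hi hj (hx_pos j hj)
      (fun k hk _ => (hx_pos k hk).le)
  have hsq_lt : ∑ k ∈ S1, (w k * b k) ^ 2 < B ^ 2 := by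
    have hB_pos : 0 < B := Finset.sum_pos hx_pos h1
    calc ∑ k ∈ S1, (w k * b k) ^ 2 < ∑ k ∈ S1, (w k * b k) * B := by
          apply Finset.sum_lt_sum
          · intro k hk
            have hkB : w k * b k ≤ B :=
              Finset.single_le_sum (fun l hl => (hx_pos l hl).le) hk
            nlinarith [hx_pos k hk]
          · exact ⟨i, hi, by nlinarith [hx_pos i hi]⟩
      _ = B ^ 2 := by rw [← Finset.sum_mul]; ring
  have hS1key : (∑ k ∈ S1, w k * b k ^ 2) * m < B ^ 2 := by
    calc (∑ k ∈ S1, w k * b k ^ 2) * m = ∑ k ∈ S1, (w k * b k ^ 2) * m := by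
          rw [Finset.sum_mul]
      _ ≤ ∑ k ∈ S1, (w k * b k) ^ 2 := by
          apply Finset.sum_le_sum
          intro k hk
          have := hm_le k hk
          have := hb1 k hk
          nlinarith [hw1 k hk, hm_pos]
      _ < B ^ 2 := hsq_lt
  -- Cauchy–Schwarz on S4
  have hS4key : B ^ 2 ≤ W * ∑ k ∈ S4, w k * b k ^ 2 := by
    have hCS := Finset.sum_mul_sq_le_sq_mul_sq S4
      (fun k => Real.sqrt (w k)) (fun k => Real.sqrt (w k) * b k)
    have e1 : ∑ k ∈ S4, Real.sqrt (w k) * (Real.sqrt (w k) * b k)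
        = ∑ k ∈ S4, w k * b k := by
      apply Finset.sum_congr rfl
      intro k hk
      rw [← mul_assoc, Real.mul_self_sqrt (hw4 k hk).le]
    have e2 : ∑ k ∈ S4, Real.sqrt (w k) ^ 2 = W := by
      apply Finset.sum_congr rfl
      intro k hk
      rw [Real.sq_sqrt (hw4 k hk).le]
    have e3 : ∑ k ∈ S4, (Real.sqrt (w k) * b k) ^ 2 = ∑ k ∈ S4, w k * b k ^ 2 := by
      apply Finset.sum_congr rfl
      intro k hk
      rw [mul_pow, Real.sq_sqrt (hw4 k hk).le]
    rw [e1, e2, e3] at hCS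
    rw [heq]
    exact hCS
  -- derive contradiction
  have hEq : (-(∑ k ∈ S1, w k * b k ^ 2) + ∑ k ∈ S4, w k * b k ^ 2) * (m * W)
      = (-W + m) * B ^ 2 := by
    have := heqL
    rw [hD] at this
    field_simp at this
    nlinarith [this]
  nlinarith [mul_lt_mul_of_pos_right hS1key hW_pos,
    mul_le_mul_of_nonneg_right hS4key hm_pos.le, hEq]
end

section
/- Let S₁, S₂, S₄ be nonempty pairwise disjoint finite index sets with positive weights wₖ and positive reals bₖ for k ∈ S₁ ∪ S₂ ∪ S₄. Suppose Σ_{k∈S₁} wₖ bₖ + Σ_{k∈S₂} wₖ bₖ = Σ_{k∈S₄} wₖ bₖ. Then D := −Σ_{k∈S₁} wₖ bₖ² + Σ_{k∈S₂} wₖ bₖ² + Σ_{k∈S₄} wₖ bₖ² satisfies D > (Σ_{k∈S₁} wₖ bₖ)² · (1/Σ_{k∈S₄} wₖ − 1/min_{k∈S₁} wₖ). -/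
/-- Strict lower bound on D with three index sets S₁, S₂, S₄. -/
theorem stmt9 (S1 S2 S4 : Finset ℕ) (h1 : S1.Nonempty) (h2 : S2.Nonempty)
    (h4 : S4.Nonempty) (hd12 : Disjoint S1 S2) (hd14 : Disjoint S1 S4)
    (hd24 : Disjoint S2 S4) (w b : ℕ → ℝ)
    (hw : ∀ k ∈ S1 ∪ S2 ∪ S4, 0 < w k) (hb : ∀ k ∈ S1 ∪ S2 ∪ S4, 0 < b k)
    (heq : (∑ k ∈ S1, w k * b k) + ∑ k ∈ S2, w k * b k = ∑ k ∈ S4, w k * b k)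
    (D : ℝ)
    (hD : D = -(∑ k ∈ S1, w k * b k ^ 2) + (∑ k ∈ S2, w k * b k ^ 2)
        + ∑ k ∈ S4, w k * b k ^ 2) :
    (∑ k ∈ S1, w k * b k) ^ 2 * (1 / (∑ k ∈ S4, w k) - 1 / S1.inf' h1 w) < D := by
  have hw1 : ∀ k ∈ S1, 0 < w k := fun k hk => hw k (by simp [hk])
  have hw2 : ∀ k ∈ S2, 0 < w k := fun k hk => hw k (by simp [hk])
  have hw4 : ∀ k ∈ S4, 0 < w k := fun k hk => hw k (by simp [hk])
  have hb1 : ∀ k ∈ S1, 0 < b k := fun k hk => hb k (by simp [hk])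
  have hb2 : ∀ k ∈ S2, 0 < b k := fun k hk => hb k (by simp [hk])
  set m := S1.inf' h1 w with hm
  have hmle : ∀ k ∈ S1, m ≤ w k := fun k hk => Finset.inf'_le _ hk
  have hmpos : 0 < m := by
    obtain ⟨i, hi, hie⟩ := Finset.exists_mem_eq_inf' h1 w
    rw [hm, hie]; exact hw1 i hi
  set A := ∑ k ∈ S1, w k * b k with hA
  set C := ∑ k ∈ S2, w k * b k with hC
  set W4 := ∑ k ∈ S4, w k with hW4
  have hApos : 0 < A := Finset.sum_pos (fun k hk => mul_pos (hw1 k hk) (hb1 k hk)) h1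
  have hCpos : 0 < C := Finset.sum_pos (fun k hk => mul_pos (hw2 k hk) (hb2 k hk)) h2
  have hW4pos : 0 < W4 := Finset.sum_pos hw4 h4
  have hB2pos : 0 < ∑ k ∈ S2, w k * b k ^ 2 :=
    Finset.sum_pos (fun k hk => mul_pos (hw2 k hk) (pow_pos (hb2 k hk) 2)) h2
  -- upper bound on S1 sum of squares
  have hB1 : ∑ k ∈ S1, w k * b k ^ 2 ≤ A ^ 2 / m := by
    have step1 : ∑ k ∈ S1, w k * b k ^ 2 ≤ ∑ k ∈ S1, (w k * b k) ^ 2 / m := by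
      refine Finset.sum_le_sum fun k hk => ?_
      rw [le_div_iff₀ hmpos]
      have hwk := hw1 k hk
      have hbk := hb1 k hk
      nlinarith [hmle k hk]
    have step2 : ∑ k ∈ S1, (w k * b k) ^ 2 ≤ A ^ 2 :=
      Finset.sum_sq_le_sq_sum_of_nonneg
        (fun k hk => (mul_pos (hw1 k hk) (hb1 k hk)).le)
    calc ∑ k ∈ S1, w k * b k ^ 2 ≤ ∑ k ∈ S1, (w k * b k) ^ 2 / m := step1
      _ = (∑ k ∈ S1, (w k * b k) ^ 2) / m := by rw [Finset.sum_div]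
      _ ≤ A ^ 2 / m := by gcongr
  -- lower bound on S4 sum of squares via Cauchy-Schwarz
  have hB4 : A ^ 2 / W4 ≤ ∑ k ∈ S4, w k * b k ^ 2 := by
    have cs := Finset.sq_sum_div_le_sum_sq_div S4 (fun k => w k * b k) hw4
    have hrw : ∑ k ∈ S4, (w k * b k) ^ 2 / w k = ∑ k ∈ S4, w k * b k ^ 2 := by
      refine Finset.sum_congr rfl fun k hk => ?_
      have := (hw4 k hk).ne'
      field_simp
    rw [hrw] at cs
    refine le_trans ?_ cs
    rw [← heq]
    gcongr ?_ / W4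
    nlinarith
  have key : A ^ 2 * (1 / W4 - 1 / m) = A ^ 2 / W4 - A ^ 2 / m := by
    rw [mul_sub, mul_one_div, mul_one_div]
  rw [key, hD]
  linarith
end

section
/- Let g be a C² function on an open interval I such that g''(z) < 0 at every critical point of g in I (every z with g'(z) = 0). Then for any K ∈ ℝ, the equation g(z) = K has at most 2 solutions in I. -/
open Set Filter Topology

private lemma stmt11_aux (I : Set ℝ) (hIopen : IsOpen I) (hIconn : I.OrdConnected)
    (g : ℝ → ℝ) (hg : ContDiffOn ℝ 2 g I)
    (hcrit : ∀ z ∈ I, deriv g z = 0 → deriv (deriv g) z < 0)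
    {a b c : ℝ} (ha : a ∈ I) (hc : c ∈ I) (hab : a < b) (hbc : b < c)
    (h1 : g a = g b) (h2 : g b = g c) : False := by
  have hsub : Icc a c ⊆ I := hIconn.out ha hc
  have hgc : ContinuousOn g I := hg.continuousOn
  -- deriv g is C¹ on I, in particular continuous and differentiable on I
  have hg1 : ContDiffOn ℝ 1 (deriv g) I := by
    have := hg.deriv_of_isOpen (m := 1) hIopen (by norm_num)
    simpa using this
  have hg'diff : ∀ t ∈ I, HasDerivAt (deriv g) (deriv (deriv g) t) t := by
    intro t ht
    have : DifferentiableAt ℝ (deriv g) t :=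
      (hg1.differentiableOn one_ne_zero t ht).differentiableAt (hIopen.mem_nhds ht)
    exact this.hasDerivAt
  have hg'cont : ContinuousOn (deriv g) I := hg1.continuousOn
  -- Rolle on [a,b] and [b,c]
  obtain ⟨p, hp, hp0⟩ := exists_deriv_eq_zero hab
    (hgc.mono (fun t ht => hsub ⟨ht.1, ht.2.trans hbc.le⟩)) h1
  obtain ⟨q, hq, hq0⟩ := exists_deriv_eq_zero hbc
    (hgc.mono (fun t ht => hsub ⟨hab.le.trans ht.1, ht.2⟩)) h2
  have hpq : p < q := hp.2.trans hq.1
  have hpqI : Icc p q ⊆ I := fun t ht =>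
    hsub ⟨hp.1.le.trans ht.1, ht.2.trans hq.2.le⟩
  have hpI : p ∈ I := hpqI ⟨le_rfl, hpq.le⟩
  have hqI : q ∈ I := hpqI ⟨hpq.le, le_rfl⟩
  -- minimizer of g on [p,q]
  obtain ⟨m, hm, hmin⟩ := isCompact_Icc.exists_isMinOn (nonempty_Icc.2 hpq.le)
    (hgc.mono hpqI)
  have hmI : m ∈ I := hpqI hm
  -- deriv g m = 0
  have hm0 : deriv g m = 0 := by
    rcases eq_or_lt_of_le hm.1 with h | hpm
    · rw [← h]; exact hp0
    rcases eq_or_lt_of_le hm.2 with h | hmq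
    · rw [h]; exact hq0
    · exact (hmin.isLocalMin (Icc_mem_nhds hpm hmq)).deriv_eq_zero
  have h2neg : deriv (deriv g) m < 0 := hcrit m hmI hm0
  -- slope of deriv g at m tends to a negative number
  have hslope : Tendsto (slope (deriv g) m) (𝓝[≠] m) (𝓝 (deriv (deriv g) m)) :=
    hasDerivAt_iff_tendsto_slope.1 (hg'diff m hmI)
  have hev : ∀ᶠ t in 𝓝[≠] m, slope (deriv g) m t < 0 :=
    hslope.eventually (Filter.Tendsto.eventually_lt_const h2neg tendsto_id)
  -- Either m < q (show g decreasing to the right) or m = q > p (increasing to the left)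
  rcases eq_or_lt_of_le hm.2 with hmq | hmq
  · -- m = q, so p < m; deriv g > 0 just left of m
    have hpm : p < m := hmq ▸ hpq
    have hevl : ∀ᶠ t in 𝓝[<] m, slope (deriv g) m t < 0 :=
      hev.filter_mono (nhdsWithin_mono _ fun t ht => ne_of_lt ht)
    obtain ⟨u, hu, hu'⟩ := (mem_nhdsLT_iff_exists_Ioo_subset).1 hevl
    set e := max u p with he
    have hem : e < m := max_lt hu hpm
    have hpos : ∀ t ∈ Ioo e m, 0 < deriv g t := by
      intro t ht
      have hs : slope (deriv g) m t < 0 := hu' ⟨lt_of_le_of_lt (le_max_left u p) ht.1, ht.2⟩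
      rw [slope_def_field, hm0] at hs
      have htm : t - m < 0 := sub_neg.2 ht.2
      have := div_neg_iff.1 hs
      rcases this with ⟨h', _⟩ | ⟨h', h''⟩
      · simpa using h'
      · exact absurd h'' (not_lt.2 htm.le)
    -- g strictly increasing on [e, m]
    have hmono : StrictMonoOn g (Icc e m) := by
      apply strictMonoOn_of_deriv_pos (convex_Icc e m)
      · exact hgc.mono (fun t ht => hpqI ⟨(le_max_right u p).trans ht.1, ht.2.trans hm.2⟩)
      · intro t ht
        rw [interior_Icc] at ht
        exact hpos t ht
    have hmid : (e + m) / 2 ∈ Ioo e m := ⟨by linarith, by linarith⟩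
    have : g ((e + m) / 2) < g m :=
      hmono ⟨hmid.1.le, hmid.2.le⟩ ⟨hem.le, le_rfl⟩ hmid.2
    have : g m ≤ g ((e + m) / 2) :=
      hmin ⟨(le_max_right u p).trans hmid.1.le, hmid.2.le.trans hm.2⟩
    linarith
  · -- m < q; deriv g < 0 just right of m
    have hevr : ∀ᶠ t in 𝓝[>] m, slope (deriv g) m t < 0 :=
      hev.filter_mono (nhdsWithin_mono _ fun t ht => ne_of_gt ht)
    obtain ⟨u, hu, hu'⟩ := (mem_nhdsGT_iff_exists_Ioo_subset).1 hevr
    set e := min u q with he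
    have hem : m < e := lt_min hu hmq
    have hneg : ∀ t ∈ Ioo m e, deriv g t < 0 := by
      intro t ht
      have hs : slope (deriv g) m t < 0 := hu' ⟨ht.1, lt_of_lt_of_le ht.2 (min_le_left u q)⟩
      rw [slope_def_field, hm0] at hs
      have htm : 0 < t - m := sub_pos.2 ht.1
      rcases div_neg_iff.1 hs with ⟨_, h''⟩ | ⟨h', _⟩
      · exact absurd h'' (not_lt.2 htm.le)
      · simpa using h'
    have hanti : StrictAntiOn g (Icc m e) := by
      apply strictAntiOn_of_deriv_neg (convex_Icc m e)
      · exact hgc.mono (fun t ht => hpqI ⟨hm.1.trans ht.1, ht.2.trans (min_le_right u q)⟩)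
      · intro t ht
        rw [interior_Icc] at ht
        exact hneg t ht
    have hmid : (m + e) / 2 ∈ Ioo m e := ⟨by linarith, by linarith⟩
    have : g ((m + e) / 2) < g m :=
      hanti ⟨le_rfl, hem.le⟩ ⟨hmid.1.le, hmid.2.le⟩ hmid.1
    have : g m ≤ g ((m + e) / 2) :=
      hmin ⟨hm.1.trans hmid.1.le, hmid.2.le.trans (min_le_right u q)⟩
    linarith

/-- If g is C² on an open interval and g'' < 0 at every critical point, then
each level K is attained at most twice. -/
theorem stmt11 (I : Set ℝ) (hIopen : IsOpen I) (hIconn : I.OrdConnected)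
    (g : ℝ → ℝ) (hg : ContDiffOn ℝ 2 g I)
    (hcrit : ∀ z ∈ I, deriv g z = 0 → deriv (deriv g) z < 0)
    (K : ℝ) :
    ∀ x y z : ℝ, x ∈ I → y ∈ I → z ∈ I →
      g x = K → g y = K → g z = K → x = y ∨ x = z ∨ y = z := by
  intro x y z hx hy hz hgx hgy hgz
  by_contra hcon
  push_neg at hcon
  obtain ⟨hxy, hxz, hyz⟩ := hcon
  have aux : ∀ a b c : ℝ, a ∈ I → c ∈ I → a < b → b < c →
      g a = K → g b = K → g c = K → False := fun a b c ha hc h1 h2 e1 e2 e3 =>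
    stmt11_aux I hIopen hIconn g hg hcrit ha hc h1 h2 (e1.trans e2.symm) (e2.trans e3.symm)
  rcases lt_trichotomy x y with h | h | h
  · rcases lt_trichotomy y z with h' | h' | h'
    · exact aux x y z hx hz h h' hgx hgy hgz
    · exact hyz h'
    · rcases lt_trichotomy x z with h'' | h'' | h''
      · exact aux x z y hx hy h'' h' hgx hgz hgy
      · exact hxz h''
      · exact aux z x y hz hy h'' h hgz hgx hgy
  · exact hxy h
  · rcases lt_trichotomy x z with h' | h' | h'
    · exact aux y x z hy hz h h' hgy hgx hgz
    · exact hxz h'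
    · rcases lt_trichotomy y z with h'' | h'' | h''
      · exact aux y z x hy hx h'' h' hgy hgz hgx
      · exact hyz h''
      · exact aux z y x hz hx h'' h hgz hgy hgx
end
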